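/- Let K be an algebraic closure of the rational function field ℚ(t), and let t also denote the image in K of the independent variable of ℚ(t). There do not exist polynomials A, B ∈ K[X] with B ≠ 0 such that A² − (X − t)·(X⁷ − X³ − 1)·B² = 4X + 1. -/

import Mathlib

open Polynomial

noncomputable section

namespace PellAux7

variable {K : Type*} [CommRing K] (d : Derivation ℤ K K)

/-- coefficientwise derivation on `K[X]` -/
def pderiv : Derivation ℤ (Polynomial K) (Polynomial K) :=
  PolynomialModule.equivPolynomialSelf.compDer d.mapCoeffs

lemma coeff_pderiv (p : K[X]) (i : ℕ) : (pderiv d p).coeff i = d (p.coeff i) := rfl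

lemma pderiv_monomial (n : ℕ) (a : K) : pderiv d (monomial n a) = monomial n (d a) := by
  ext i
  rw [coeff_pderiv, coeff_monomial, coeff_monomial, apply_ite d, map_zero]

lemma pderiv_C (a : K) : pderiv d (C a) = C (d a) := by
  simp [← monomial_zero_left, pderiv_monomial]

lemma pderiv_X : pderiv d (X : K[X]) = 0 := by
  rw [← monomial_one_one_eq_X, pderiv_monomial, d.map_one_eq_zero, monomial_zero_right]

lemma natDegree_pderiv_le (p : K[X]) : (pderiv d p).natDegree ≤ p.natDegree := by
  apply natDegree_le_iff_coeff_eq_zero.2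
  intro m hm
  rw [coeff_pderiv, coeff_eq_zero_of_natDegree_lt hm, map_zero]

lemma pderiv_derivative (p : K[X]) :
    pderiv d (derivative p) = derivative (pderiv d p) := by
  ext n
  rw [coeff_pderiv, coeff_derivative, coeff_derivative, coeff_pderiv]
  have h1 : p.coeff (n + 1) * (n + 1) = (n + 1) • p.coeff (n + 1) := by
    rw [nsmul_eq_mul, mul_comm]; push_cast; ring
  rw [h1, map_nsmul, nsmul_eq_mul, mul_comm]
  push_cast; ring

lemma eval_equivPolynomialSelf (x : K) (f : PolynomialModule K K) :
    (PolynomialModule.equivPolynomialSelf f).eval x = PolynomialModule.eval x f := by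
  induction f using PolynomialModule.induction_linear with
  | zero => simp
  | add p q hp hq => rw [map_add, map_add, eval_add, hp, hq]
  | single n a =>
    rw [PolynomialModule.equivPolynomialSelf_apply_eq, PolynomialModule.equivPolynomial_single,
      PolynomialModule.eval_single, eval_monomial, smul_eq_mul, mul_comm]

lemma eval_pderiv (x : K) (p : K[X]) :
    d (p.eval x) = (pderiv d p).eval x + (derivative p).eval x * d x := by
  have h := d.apply_eval_eq x p
  rw [smul_eq_mul] at h
  rw [h, ← eval_equivPolynomialSelf]
  rfl

lemma deriv_natCast (n : ℕ) : d (n : K) = 0 := by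
  induction n with
  | zero => simp
  | succ m ih => push_cast; rw [map_add, ih, d.map_one_eq_zero, add_zero]

lemma eq_zero_of_pderiv {K : Type*} [Field K] [CharZero K] (d : Derivation ℤ K K) (τ : K)
    (hτ : d τ = 1) : ∀ p : K[X], pderiv d p = 0 → p.eval τ = 0 → p = 0 := by
  suffices H : ∀ n, ∀ p : K[X], p.natDegree ≤ n → pderiv d p = 0 → p.eval τ = 0 → p = 0 by
    exact fun p => H p.natDegree p le_rfl
  intro n
  induction n with
  | zero =>
    intro p hdeg h1 h2
    rw [eq_C_of_natDegree_eq_zero (Nat.le_zero.mp hdeg)] at h2 ⊢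
    rw [eval_C] at h2
    rw [h2, map_zero]
  | succ n ih =>
    intro p hdeg h1 h2
    have h3 : d (p.eval τ) = 0 := by rw [h2, map_zero]
    rw [eval_pderiv d τ p, h1, hτ, mul_one, eval_zero, zero_add] at h3
    have h4 : pderiv d (derivative p) = 0 := by
      rw [pderiv_derivative, h1]; exact derivative_zero
    have h5 : derivative p = 0 := by
      refine ih (derivative p) ?_ h4 h3
      have := natDegree_derivative_le p
      omega
    have h6 : p.natDegree = 0 := natDegree_eq_zero_of_derivative_eq_zero h5
    rw [eq_C_of_natDegree_eq_zero h6] at h2 ⊢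
    rw [eval_C] at h2
    rw [h2, map_zero]


abbrev Fq := RatFunc ℚ

theorem main0 {K : Type} [Field K] [Algebra Fq K] [IsAlgClosure Fq K]
    (dd : Derivation ℤ K K) (hdd : dd (algebraMap Fq K RatFunc.X) = 1) :
    ¬ ∃ A B : Polynomial K, B ≠ 0 ∧
      A ^ 2 - (X - C (algebraMap Fq K RatFunc.X)) *
        (X ^ 7 - X ^ 3 - 1) * B ^ 2 = 4 * X + 1 := by
  haveI : CharZero Fq := charZero_of_injective_algebraMap (algebraMap ℚ Fq).injective
  haveI : CharZero K := charZero_of_injective_algebraMap (algebraMap Fq K).injective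
  rintro ⟨A, B, hB, h⟩
  classical
  set τ : K := algebraMap Fq K RatFunc.X with hτdef
  set E : K[X] := X ^ 7 - X ^ 3 - 1 with hEdef
  set L : K[X] := X - C τ with hLdef
  set F : K[X] := 4 * X + 1 with hFdef
  -- basic degree facts
  have hEmonic : E.Monic := by
    rw [hEdef, show (X ^ 7 - X ^ 3 - 1 : K[X]) = X ^ 7 - (X ^ 3 + 1) by ring]
    refine monic_X_pow_sub ?_
    refine lt_of_le_of_lt (degree_add_le _ _) ?_
    simp [degree_X_pow]
    norm_num
  have hE7 : E.natDegree = 7 := by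
    rw [hEdef]
    compute_degree!
  have hLmonic : L.Monic := monic_X_sub_C τ
  have hL1 : L.natDegree = 1 := natDegree_X_sub_C τ
  have hF1 : F.natDegree = 1 := by rw [hFdef]; compute_degree!
  have hFne : F ≠ 0 := fun h0 => by simp [h0] at hF1
  have hEne : E ≠ 0 := hEmonic.ne_zero
  have hLne : L ≠ 0 := hLmonic.ne_zero
  have hB2 : B ^ 2 ≠ 0 := pow_ne_zero _ hB
  have hDBdeg : (L * E * B ^ 2).natDegree = 8 + 2 * B.natDegree := by
    rw [natDegree_mul (mul_ne_zero hLne hEne) hB2, natDegree_mul hLne hEne,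
      natDegree_pow, hL1, hE7]
    try ring
  have hA2 : A ^ 2 = L * E * B ^ 2 + F := by linear_combination h
  have hAne : A ≠ 0 := by
    intro h0
    rw [h0] at hA2
    have h1 : L * E * B ^ 2 = -F := by linear_combination -hA2
    have := congrArg natDegree h1
    rw [hDBdeg, natDegree_neg, hF1] at this
    omega
  have hAdeg : A.natDegree = B.natDegree + 4 := by
    have h1 : (A ^ 2).natDegree = 8 + 2 * B.natDegree := by
      rw [hA2, natDegree_add_eq_left_of_natDegree_lt, hDBdeg]
      rw [hDBdeg, hF1]; omega
    rw [natDegree_pow] at h1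
    omega
  -- apply the derivation
  set δ := pderiv dd with hδdef
  have hδE : δ E = 0 := by
    rw [hEdef, map_sub, map_sub, Derivation.leibniz_pow, Derivation.leibniz_pow, pderiv_X,
      Derivation.map_one_eq_zero]
    simp
  have hδL : δ L = -1 := by
    rw [hLdef, map_sub, pderiv_X, pderiv_C, hdd, map_one, zero_sub]
  have hδF : δ F = 0 := by
    have h4 : (4 : K[X]) = C (4 : K) := (map_ofNat C 4).symm
    rw [hFdef, map_add, Derivation.map_one_eq_zero, Derivation.leibniz, pderiv_X, h4, pderiv_C]
    rw [show dd (4 : K) = 0 from by exact_mod_cast deriv_natCast dd 4]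
    simp
  have hδh := congrArg δ h
  rw [map_sub, hδF] at hδh
  have e1 : δ (A ^ 2) = 2 * A * δ A := by
    rw [Derivation.leibniz_pow]
    simp [smul_eq_mul]
    ring
  have e2 : δ (L * E * B ^ 2) = -(E * B ^ 2) + L * E * (2 * B * δ B) := by
    rw [Derivation.leibniz, Derivation.leibniz, Derivation.leibniz_pow, hδE, hδL]
    simp [smul_eq_mul]
    ring
  have key : 2 * A * δ A = E * B * (2 * L * δ B - B) := by
    rw [e1, e2] at hδh
    linear_combination hδh
  -- coprimality
  have hcFE : IsCoprime F E := by
    set c : K := -(4⁻¹ : K) with hcdef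
    have hEc : E.eval c ≠ 0 := by
      rw [hEdef]
      simp only [eval_sub, eval_pow, eval_X, eval_one, hcdef]
      intro hcon
      have h16 : ((-4⁻¹ : K) ^ 7 - (-4⁻¹ : K) ^ 3 - 1) * 16384 = -16129 := by norm_num
      rw [hcon, zero_mul] at h16
      norm_num at h16
    have hbz : IsCoprime (X - C c) E := by
      refine ⟨-(C (E.eval c)⁻¹) * (E /ₘ (X - C c)), C (E.eval c)⁻¹, ?_⟩
      have hmod := modByMonic_add_div E (X - C c)
      rw [modByMonic_X_sub_C_eq_C_eval] at hmod
      have : (C (E.eval c)⁻¹) * C (E.eval c) = 1 := by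
        rw [← C_mul, inv_mul_cancel₀ hEc, C_1]
      linear_combination this - (C (E.eval c)⁻¹ : K[X]) * hmod
    have hc4 : IsCoprime (C (4:K)) E := by
      refine ⟨C (4⁻¹ : K), 0, ?_⟩
      rw [zero_mul, add_zero, ← C_mul]
      norm_num
    have hFeq : F = C (4 : K) * (X - C c) := by
      rw [hFdef, hcdef, mul_sub, ← C_mul,
        show (4:K) * -(4⁻¹) = -1 by norm_num, C_neg, C_1,
        show (4 : K[X]) = C (4 : K) from (map_ofNat C 4).symm]
      ring
    rw [hFeq]
    exact hc4.mul_left hbz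
  have hABcop : IsCoprime A B := by
    rw [← EuclideanDomain.gcd_isUnit_iff]
    set g := EuclideanDomain.gcd A B with hgdef
    have hgA : g ∣ A := EuclideanDomain.gcd_dvd_left A B
    have hgB : g ∣ B := EuclideanDomain.gcd_dvd_right A B
    have hgne : g ≠ 0 := fun h0 => hAne ((EuclideanDomain.gcd_eq_zero_iff.mp h0).1)
    have hg2F : g ^ 2 ∣ F := by
      have h1 : g ^ 2 ∣ A ^ 2 := pow_dvd_pow_of_dvd hgA 2
      have h2 : g ^ 2 ∣ L * E * B ^ 2 := Dvd.dvd.mul_left (pow_dvd_pow_of_dvd hgB 2) _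
      have : F = A ^ 2 - L * E * B ^ 2 := by linear_combination -hA2
      rw [this]
      exact dvd_sub h1 h2
    have hdeg := natDegree_le_of_dvd hg2F hFne
    rw [natDegree_pow, hF1] at hdeg
    have hg0 : g.natDegree = 0 := by omega
    obtain ⟨a, ha⟩ := natDegree_eq_zero.mp hg0
    rw [← ha]
    rw [← ha] at hgne
    exact isUnit_C.mpr (isUnit_iff_ne_zero.mpr (fun h0 => hgne (by rw [h0, C_0])))
  have hAEcop : IsCoprime A E := by
    rw [← EuclideanDomain.gcd_isUnit_iff]
    set g := EuclideanDomain.gcd A E with hgdef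
    have hgA : g ∣ A := EuclideanDomain.gcd_dvd_left A E
    have hgE : g ∣ E := EuclideanDomain.gcd_dvd_right A E
    have hgF : g ∣ F := by
      have h1 : g ∣ A ^ 2 := dvd_pow hgA two_ne_zero
      have h2 : g ∣ L * E * B ^ 2 := (hgE.mul_left L).mul_right (B ^ 2)
      have : F = A ^ 2 - L * E * B ^ 2 := by linear_combination -hA2
      rw [this]
      exact dvd_sub h1 h2
    exact hcFE.isUnit_of_dvd' hgF hgE
  have hcop : IsCoprime A (E * B) := hAEcop.mul_right hABcop
  -- divisibility and degree
  have hdvd : A ∣ 2 * L * δ B - B := by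
    have h1 : A ∣ E * B * (2 * L * δ B - B) := ⟨2 * δ A, by linear_combination -key⟩
    exact hcop.dvd_of_dvd_mul_left h1
  have hG0 : 2 * L * δ B - B = 0 := by
    by_contra hne
    have h1 : A.natDegree ≤ (2 * L * δ B - B).natDegree := natDegree_le_of_dvd hdvd hne
    have h2 : (2 * L * δ B - B).natDegree ≤ B.natDegree + 1 := by
      refine le_trans (natDegree_sub_le _ _) ?_
      have h3 : (2 * L * δ B).natDegree ≤ B.natDegree + 1 := by
        refine le_trans (natDegree_mul_le) ?_
        have h4 : (2 * L : K[X]).natDegree ≤ 1 := by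
          refine le_trans (natDegree_mul_le) ?_
          simp [hL1]
        have := natDegree_pderiv_le dd B
        rw [← hδdef] at this
        omega
      omega
    omega
  have hδA : δ A = 0 := by
    rw [hG0, mul_zero] at key
    rcases mul_eq_zero.mp key with h1 | h1
    · exact absurd (mul_eq_zero.mp h1) (by
        rintro (h2 | h2)
        · exact two_ne_zero h2
        · exact hAne h2)
    · exact h1
  -- evaluate at τ
  have heval : (A.eval τ) ^ 2 = 4 * τ + 1 := by
    have := congrArg (eval τ) h
    simpa [hFdef, hLdef, hEdef, sub_self] using this
  -- conclude
  have hP : A ^ 2 - F = 0 := by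
    refine eq_zero_of_pderiv dd τ hdd _ ?_ ?_
    · rw [map_sub, hδF, e1, hδA, mul_zero, sub_zero]
    · rw [eval_sub, eval_pow, hFdef]
      simp [heval]
  have hfin : A ^ 2 = F := by linear_combination hP
  have := congrArg natDegree hfin
  rw [natDegree_pow, hF1, hAdeg] at this
  omega




theorem exists_deriv {K : Type} [Field K] [Algebra Fq K] [IsAlgClosure Fq K] :
    ∃ d : Derivation ℤ K K, d (algebraMap Fq K RatFunc.X) = 1 := by
  haveI : CharZero Fq := charZero_of_injective_algebraMap (algebraMap ℚ Fq).injective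
  haveI : CharZero K := charZero_of_injective_algebraMap (algebraMap Fq K).injective
  letI : Algebra (Polynomial ℚ) K :=
    ((algebraMap Fq K).comp (algebraMap (Polynomial ℚ) Fq)).toAlgebra
  haveI : IsScalarTower (Polynomial ℚ) Fq K := IsScalarTower.of_algebraMap_eq fun _ => rfl
  haveI h1 : Algebra.FormallyEtale (Polynomial ℚ) Fq :=
    Algebra.FormallyEtale.of_isLocalization (nonZeroDivisors (Polynomial ℚ))
  haveI h2 : Algebra.FormallyEtale Fq K := Algebra.FormallyEtale.of_isSeparable Fq K
  haveI h3 : Algebra.FormallyEtale (Polynomial ℚ) K :=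
    Algebra.FormallyEtale.comp (Polynomial ℚ) Fq K
  set g : Polynomial ℚ →+* K := algebraMap (Polynomial ℚ) K with hg
  -- the dual numbers over K, with the twisted ℚ[X]-algebra structure
  let φ : Polynomial ℚ →+* TrivSqZeroExt K K :=
  { toFun := fun p => .inl (g p) + .inr (g (derivative p))
    map_one' := by simp
    map_mul' := by
      intro p q
      refine TrivSqZeroExt.ext ?_ ?_
      · simp [TrivSqZeroExt.fst_mul]
      · simp [TrivSqZeroExt.snd_mul, derivative_mul, smul_eq_mul, op_smul_eq_smul]
        ring
    map_zero' := by simp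
    map_add' := by
      intro p q
      refine TrivSqZeroExt.ext ?_ ?_ <;>
        simp [map_add] }
  letI : Algebra (Polynomial ℚ) (TrivSqZeroExt K K) := φ.toAlgebra
  set I : Ideal (TrivSqZeroExt K K) :=
    RingHom.ker ((TrivSqZeroExt.fstHom K K K : TrivSqZeroExt K K →ₐ[K] K) :
      TrivSqZeroExt K K →+* K) with hI
  have memI : ∀ x : TrivSqZeroExt K K, x ∈ I ↔ x.fst = 0 := by
    intro x; rw [hI, RingHom.mem_ker]; rfl
  have hIsq : I ^ 2 = ⊥ := by
    rw [pow_two, eq_bot_iff]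
    refine Ideal.mul_le.2 ?_
    intro a ha b hb
    rw [memI] at ha hb
    rw [Ideal.mem_bot]
    refine TrivSqZeroExt.ext ?_ ?_
    · simp [TrivSqZeroExt.fst_mul, ha, hb]
    · simp [TrivSqZeroExt.snd_mul, ha, hb]
  let g0 : K →ₐ[Polynomial ℚ] (TrivSqZeroExt K K) ⧸ I :=
  { toFun := fun a => Ideal.Quotient.mk I (.inl a)
    map_one' := by simp
    map_mul' := by intro a b; rw [← map_mul, ← TrivSqZeroExt.inl_mul]
    map_zero' := by simp
    map_add' := by intro a b; rw [← map_add, ← TrivSqZeroExt.inl_add]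
    commutes' := by
      intro p
      show _ = Ideal.Quotient.mk I (φ p)
      rw [Ideal.Quotient.eq]
      rw [memI]
      simp [φ]
      exact sub_self _ }
  obtain ⟨σ, hσ⟩ := (Algebra.FormallyEtale.comp_bijective (R := Polynomial ℚ) (A := K)
    I hIsq).2 g0
  have hfst : ∀ a : K, (σ a).fst = a := by
    intro a
    have := congrArg (fun f => f a) hσ
    simp only [AlgHom.comp_apply, Ideal.Quotient.mkₐ_eq_mk] at this
    have h2 : Ideal.Quotient.mk I (σ a) = Ideal.Quotient.mk I (.inl a) := this
    rw [Ideal.Quotient.eq, memI] at h2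
    exact sub_eq_zero.mp h2
  let dlin : K →ₗ[ℤ] K := ((TrivSqZeroExt.sndHom K K).toAddMonoidHom.comp
      σ.toAddMonoidHom).toIntLinearMap
  refine ⟨{ toLinearMap := dlin, map_one_eq_zero' := ?_, leibniz' := ?_ }, ?_⟩
  · show (σ 1).snd = 0
    simp
  · intro a b
    show (σ (a * b)).snd = a • (σ b).snd + b • (σ a).snd
    rw [map_mul, TrivSqZeroExt.snd_mul, hfst, hfst]
    simp only [op_smul_eq_smul, smul_eq_mul]
  show (σ (algebraMap Fq K RatFunc.X)).snd = 1
  have hτ : algebraMap Fq K RatFunc.X = algebraMap (Polynomial ℚ) K X := by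
    rw [← RatFunc.algebraMap_X (K := ℚ)]
    rfl
  rw [hτ, σ.commutes]
  show (φ X).snd = 1
  simp [φ]


end PellAux7

end

open Polynomial

/-- Let `K` be an algebraic closure of `ℚ(t)` and let `t` also denote
the image in `K` of the independent variable. There do not exist `A, B ∈ K[X]` with
`B ≠ 0` such that `A² − (X − t)·(X⁷ − X³ − 1)·B² = 4X + 1`. -/
theorem no_nontrivial_solution_over_closure
    {K : Type*} [Field K] [Algebra (RatFunc ℚ) K] [IsAlgClosure (RatFunc ℚ) K] :
    ¬ ∃ A B : Polynomial K, B ≠ 0 ∧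
      A ^ 2 - (X - C (algebraMap (RatFunc ℚ) K RatFunc.X)) *
        (X ^ 7 - X ^ 3 - 1) * B ^ 2 = 4 * X + 1 := by
  obtain ⟨d, hd⟩ := PellAux7.exists_deriv (K := AlgebraicClosure (RatFunc ℚ))
  have h0 := PellAux7.main0 (K := AlgebraicClosure (RatFunc ℚ)) d hd
  rintro ⟨A, B, hB, h⟩
  let e : K ≃ₐ[RatFunc ℚ] AlgebraicClosure (RatFunc ℚ) :=
    IsAlgClosure.equiv (RatFunc ℚ) K (AlgebraicClosure (RatFunc ℚ))
  refine h0 ⟨A.map (e.toAlgHom.toRingHom), B.map (e.toAlgHom.toRingHom), ?_, ?_⟩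
  · exact (Polynomial.map_ne_zero_iff (f := e.toAlgHom.toRingHom)
      (e.toRingEquiv.injective)).mpr hB
  · have h2 := congrArg (Polynomial.map (e.toAlgHom.toRingHom : K →+* AlgebraicClosure (RatFunc ℚ))) h
    simpa [Polynomial.map_ofNat, AlgHom.commutes] using h2
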